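/- Let N > 1 be an integer. For each positive divisor D of N, set Q_{N,D}(T) = (T^N − 1)/(T^D − 1) ∈ ℤ[T]. Then the ideal of ℤ[T] generated by the polynomials Q_{N, N/p}(T), as p ranges over the prime divisors of N, equals the principal ideal generated by the cyclotomic polynomial Φ_N(T). -/

import Mathlib

open Polynomial

/-- `Q_{N,D}(T) = (T^N − 1)/(T^D − 1) = Σ_{i<N/D} T^{iD}` for `D ∣ N`. -/
noncomputable def QND (N D : ℕ) : Polynomial ℤ :=
  ∑ i ∈ Finset.range (N / D), (X : Polynomial ℤ) ^ (i * D)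

namespace SpanQNDAux

/-- The cofactor of `Φ_N` in `Q_{N,N/p}`. -/
noncomputable def Sp (N p : ℕ) : Polynomial ℤ :=
  ∏ d ∈ N.divisors.filter fun d => d ≠ N ∧ ¬ d ∣ N / p, cyclotomic d ℤ

lemma QND_eq_cyclotomic_mul_Sp {N p : ℕ} (hN : 1 < N) (hp : p.Prime) (hpN : p ∣ N) :
    QND N (N / p) = cyclotomic N ℤ * Sp N p := by
  have hN0 : 0 < N := by omega
  set D := N / p with hD
  have hDdvd : D ∣ N := Nat.div_dvd_of_dvd hpN
  have hD0 : 0 < D := Nat.div_pos (Nat.le_of_dvd hN0 hpN) hp.pos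
  have hDlt : D < N := Nat.div_lt_self hN0 hp.one_lt
  have hDp : D * p = N := Nat.div_mul_cancel hpN
  have hNdD : N / D = p := by
    rw [← hDp, Nat.mul_div_cancel_left _ hD0]
  have hXD : (X : Polynomial ℤ) ^ D - 1 ≠ 0 := by
    have := monic_X_pow_sub_C (1 : ℤ) hD0.ne'
    simpa using this.ne_zero
  apply mul_right_cancel₀ hXD
  have key1 : QND N D * ((X : Polynomial ℤ) ^ D - 1) = X ^ N - 1 := by
    unfold QND
    rw [hNdD]
    have hrw : ∀ i, (X : Polynomial ℤ) ^ (i * D) = (X ^ D) ^ i := by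
      intro i; rw [← pow_mul, mul_comm]
    simp_rw [hrw]
    rw [geom_sum_mul, ← pow_mul, hDp]
  rw [key1]
  have hprop : D ∈ N.properDivisors := Nat.mem_properDivisors.mpr ⟨hDdvd, hDlt⟩
  have key2 := X_pow_sub_one_mul_prod_cyclotomic_eq_X_pow_sub_one_of_dvd ℤ hDdvd hN0.ne'
  rw [← key2]
  have hset : N.divisors \ D.divisors = insert N (N.divisors.filter fun d => d ≠ N ∧ ¬ d ∣ D) := by
    ext d
    simp only [Finset.mem_sdiff, Nat.mem_divisors, Finset.mem_insert, Finset.mem_filter]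
    constructor
    · rintro ⟨⟨hdN, -⟩, hnd⟩
      rcases eq_or_ne d N with rfl | hne
      · exact Or.inl rfl
      · exact Or.inr ⟨⟨hdN, hN0.ne'⟩, hne, fun hdD => hnd ⟨hdD, hD0.ne'⟩⟩
    · rintro (rfl | ⟨⟨hdN, -⟩, hne, hnd⟩)
      · exact ⟨⟨dvd_rfl, hN0.ne'⟩, fun h => absurd (Nat.le_of_dvd hD0 h.1) (not_le.mpr hDlt)⟩
      · exact ⟨⟨hdN, hN0.ne'⟩, fun h => hnd h.1⟩
  rw [hset, Finset.prod_insert (by simp), Sp]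
  ring

lemma exists_prime_dvd_div {d N : ℕ} (hN : 0 < N) (hd : d ∣ N) (hne : d ≠ N) :
    ∃ p, p.Prime ∧ p ∣ N ∧ d ∣ N / p := by
  obtain ⟨k, rfl⟩ := hd
  have hk1 : k ≠ 1 := by rintro rfl; simp at hne
  obtain ⟨p, hp, hpk⟩ := Nat.exists_prime_and_dvd hk1
  obtain ⟨j, rfl⟩ := hpk
  have h1 : d * (p * j) = p * (d * j) := by ring
  refine ⟨p, hp, ⟨d * j, h1⟩, ?_⟩
  rw [h1, Nat.mul_div_cancel_left _ hp.pos]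
  exact Dvd.intro j rfl

/-- In `F[X]` over a field, if no prime divides every element of `s`, the span is `⊤`. -/
lemma span_eq_top_of_no_common_factor {F : Type*} [Field F] (s : Set (Polynomial F))
    (h : ∀ g : Polynomial F, Prime g → ∃ f ∈ s, ¬ g ∣ f) :
    Ideal.span s = ⊤ := by
  by_contra hne
  obtain ⟨M, hM, hle⟩ := Ideal.exists_le_maximal _ hne
  obtain ⟨g, hg⟩ := (IsPrincipalIdealRing.principal M).principal
  have hg' : M = Ideal.span {g} := hg
  have hg0 : g ≠ 0 := by
    rintro rfl
    have hbot : M = ⊥ := by rw [hg']; exact Ideal.span_singleton_eq_bot.mpr rfl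
    exact Ring.ne_bot_of_isMaximal_of_not_isField hM (Ideal.polynomial_not_isField F) hbot
  have hgp : Prime g := (Ideal.span_singleton_prime hg0).1 (hg' ▸ hM.isPrime)
  obtain ⟨f, hfs, hnd⟩ := h g hgp
  exact hnd (Ideal.mem_span_singleton.1 (hg' ▸ hle (Ideal.subset_span hfs)))

lemma one_mem_of_descent (J : Ideal (Polynomial ℤ))
    (hstep : ∀ q : ℕ, q.Prime → J ⊔ Ideal.span {C (q : ℤ)} = ⊤)
    (c : ℤ) (hc : c ≠ 0) (hcJ : C c ∈ J) : (1 : Polynomial ℤ) ∈ J := by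
  suffices H : ∀ n : ℕ, ∀ c : ℤ, c.natAbs = n → c ≠ 0 → C c ∈ J → (1 : Polynomial ℤ) ∈ J from
    H _ c rfl hc hcJ
  intro n
  induction n using Nat.strong_induction_on with
  | _ n ih =>
    intro c hcn hc hcJ
    rcases eq_or_ne c.natAbs 1 with h1 | h1
    · have hu : IsUnit (C c) := by
        rw [Polynomial.isUnit_C, Int.isUnit_iff]
        rcases Int.natAbs_eq c with h | h <;> rw [h, h1] <;> simp
      have : J = ⊤ := Ideal.eq_top_of_isUnit_mem J hcJ hu
      rw [this]; trivial
    · obtain ⟨q, hqp, hqc⟩ := Nat.exists_prime_and_dvd h1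
      have hqz : (q : ℤ) ∣ c :=
        dvd_trans (Int.natCast_dvd_natCast.mpr hqc) (Int.natAbs_dvd.mpr dvd_rfl)
      obtain ⟨c', rfl⟩ := hqz
      have htop := hstep q hqp
      rw [Ideal.eq_top_iff_one] at htop
      obtain ⟨j, hj, y, hy, hjy⟩ := Submodule.mem_sup.1 htop
      obtain ⟨u, rfl⟩ := Ideal.mem_span_singleton'.1 hy
      have hc' : c' ≠ 0 := by rintro rfl; simp at hc
      have hmem : C c' ∈ J := by
        have hrw : C c' = C c' * j + u * C ((q : ℤ) * c') := by
          rw [map_mul]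
          calc C c' = C c' * (j + u * C (q:ℤ)) := by rw [hjy, mul_one]
          _ = C c' * j + u * (C (q:ℤ) * C c') := by ring
        rw [hrw]
        exact add_mem (J.mul_mem_left _ hj) (J.mul_mem_left _ hcJ)
      refine ih c'.natAbs ?_ c' rfl hc' hmem
      subst hcn
      rw [Int.natAbs_mul, Int.natAbs_natCast]
      have h2 : 2 ≤ q := hqp.two_le
      have h3 : 1 ≤ c'.natAbs := Int.natAbs_pos.mpr hc'
      nlinarith

/-- denominator clearing -/
lemma exists_int_multiple (f : Polynomial ℚ) :
    ∃ n : ℤ, n ≠ 0 ∧ ∃ g : Polynomial ℤ,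
      g.map (Int.castRingHom ℚ) = C (n : ℚ) * f := by
  induction f using Polynomial.induction_on with
  | C a =>
    refine ⟨a.den, by exact_mod_cast a.den_nz, C a.num, ?_⟩
    rw [map_C]
    rw [← C_mul]
    congr 1
    push_cast
    rw [mul_comm]
    exact_mod_cast (Rat.mul_den_eq_num a).symm
  | add p q hp hq =>
    obtain ⟨n1, hn1, g1, hg1⟩ := hp
    obtain ⟨n2, hn2, g2, hg2⟩ := hq
    refine ⟨n1 * n2, mul_ne_zero hn1 hn2, C n2 * g1 + C n1 * g2, ?_⟩
    simp only [Polynomial.map_add, Polynomial.map_mul, map_C, hg1, hg2]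
    rw [show ((Int.castRingHom ℚ) n2) = (n2:ℚ) from rfl, show ((Int.castRingHom ℚ) n1) = (n1:ℚ) from rfl]
    rw [Int.cast_mul, C_mul]
    ring
  | monomial n a ih =>
    obtain ⟨m, hm, g, hg⟩ := ih
    refine ⟨m, hm, g * X, ?_⟩
    simp only [Polynomial.map_mul, Polynomial.map_X, hg]
    ring

lemma exists_C_mem_span_of_rat (s : Set (Polynomial ℤ))
    (h : Ideal.span ((fun f => f.map (Int.castRingHom ℚ)) '' s) = ⊤) :
    ∃ c : ℤ, c ≠ 0 ∧ C c ∈ Ideal.span s := by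
  have h1 : (1 : Polynomial ℚ) ∈ Ideal.span ((fun f => f.map (Int.castRingHom ℚ)) '' s) := by
    rw [h]; trivial
  obtain ⟨co, hsupp, hsum⟩ := Submodule.mem_span_set.mp h1
  have hpre : ∀ x ∈ co.support, ∃ g ∈ s, g.map (Int.castRingHom ℚ) = x := by
    intro x hx
    obtain ⟨g, hg, hgx⟩ := hsupp hx
    exact ⟨g, hg, hgx⟩
  choose G hGs hGmap using hpre
  choose nn hnn gg hgg using fun x : Polynomial ℚ => exists_int_multiple (co x)
  refine ⟨∏ x ∈ co.support, nn x, Finset.prod_ne_zero_iff.mpr fun x _ => hnn x, ?_⟩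
  have key : C (∏ x ∈ co.support, nn x) =
      ∑ x ∈ co.support.attach, C (∏ y ∈ co.support.erase x.1, nn y) * gg x.1 * G x.1 x.2 := by
    apply Polynomial.map_injective (Int.castRingHom ℚ) Int.cast_injective
    rw [Polynomial.map_sum, map_C]
    have hterm : ∀ x ∈ co.support.attach,
        ((C (∏ y ∈ co.support.erase x.1, nn y) * gg x.1 * G x.1 x.2).map (Int.castRingHom ℚ)) =
          C ((∏ y ∈ co.support, nn y : ℤ) : ℚ) * (co x.1 • x.1) := by
      rintro ⟨x, hx⟩ _
      rw [Polynomial.map_mul, Polynomial.map_mul, map_C, hgg, hGmap x hx, smul_eq_mul]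
      have hC : C (((∏ y ∈ co.support.erase x, nn y : ℤ)) : ℚ) * C ((nn x : ℤ) : ℚ) =
          C ((∏ y ∈ co.support, nn y : ℤ) : ℚ) := by
        rw [← C_mul, ← Int.cast_mul, Finset.prod_erase_mul co.support nn hx]
      rw [show ((Int.castRingHom ℚ) (∏ y ∈ co.support.erase x, nn y))
            = (((∏ y ∈ co.support.erase x, nn y : ℤ)) : ℚ) from rfl]
      rw [← hC]; ring
    rw [Finset.sum_congr rfl hterm, ← Finset.mul_sum]
    rw [co.support.sum_attach (fun a => co a • a)]
    have hsum' : co.sum (fun i r => r • i) = ∑ x ∈ co.support, co x • x := rfl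
    rw [← hsum', hsum, mul_one]
    rfl
  rw [key]
  apply Ideal.sum_mem
  rintro ⟨x, hx⟩ _
  exact Ideal.mul_mem_left _ _ (Ideal.subset_span (hGs x hx))

lemma sup_span_C_eq_top (s : Set (Polynomial ℤ)) (q : ℕ) (_hq : q.Prime)
    (h : Ideal.span ((fun f => f.map (Int.castRingHom (ZMod q))) '' s) = ⊤) :
    Ideal.span s ⊔ Ideal.span {C (q : ℤ)} = ⊤ := by
  set φ : Polynomial ℤ →+* Polynomial (ZMod q) := Polynomial.mapRingHom (Int.castRingHom (ZMod q))
  have hsurj : Function.Surjective φ :=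
    Polynomial.map_surjective _ ZMod.intCast_surjective
  set K := Ideal.span s ⊔ Ideal.span {C (q : ℤ)} with hK
  have hker : RingHom.ker φ ≤ K := by
    intro f hf
    have hf0 : φ f = 0 := hf
    have hdvd : C (q : ℤ) ∣ f := by
      rw [Polynomial.C_dvd_iff_dvd_coeff]
      intro i
      have hco : ((f.coeff i : ℤ) : ZMod q) = 0 := by
        have := congrArg (fun g => Polynomial.coeff g i) hf0
        simpa [φ, Polynomial.coeff_map] using this
      exact (ZMod.intCast_zmod_eq_zero_iff_dvd _ _).1 hco
    exact Ideal.mem_sup_right (Ideal.mem_span_singleton.2 hdvd)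
  have hmap : K.map φ = ⊤ := by
    rw [eq_top_iff, ← h]
    have : Ideal.span ((fun f => f.map (Int.castRingHom (ZMod q))) '' s) =
        Ideal.map φ (Ideal.span s) := (Ideal.map_span φ s).symm
    rw [this]
    exact Ideal.map_mono le_sup_left
  have hcomap := Ideal.comap_map_of_surjective φ hsurj K
  rw [hmap] at hcomap
  have htop : Ideal.comap φ ⊤ = ⊤ := rfl
  rw [htop] at hcomap
  have hkerK : Ideal.comap φ ⊥ ≤ K := hker
  rw [sup_eq_left.mpr hkerK] at hcomap
  exact hcomap.symm

/-- arithmetic contradiction -/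
lemma arith_contradiction (N q : ℕ) (hN : 1 < N) (hq : q.Prime) (d : ℕ → ℕ) (e : ℕ)
    (hd : ∀ p ∈ N.primeFactors, d p ∣ N ∧ d p ≠ N ∧ ¬ d p ∣ N / p)
    (he : ∀ p ∈ N.primeFactors, ordCompl[q] (d p) = e) : False := by
  have hN0 : 0 < N := by omega
  have hne : N.primeFactors.Nonempty := Nat.nonempty_primeFactors.mpr hN
  obtain ⟨p0, hp0⟩ := hne
  have hd0 : ∀ p ∈ N.primeFactors, d p ≠ 0 := fun p hp =>
    Nat.pos_of_dvd_of_pos (hd p hp).1 hN0 |>.ne'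
  have hvp : ∀ p ∈ N.primeFactors, (d p).factorization p = N.factorization p := by
    intro p hp
    obtain ⟨hdvd, hne', hndvd⟩ := hd p hp
    have hpp : p.Prime := Nat.prime_of_mem_primeFactors hp
    have hpN : p ∣ N := Nat.dvd_of_mem_primeFactors hp
    have hle : (d p).factorization p ≤ N.factorization p :=
      (Nat.factorization_le_iff_dvd (hd0 p hp) hN0.ne').mpr hdvd p
    rcases lt_or_eq_of_le hle with hlt | heq
    · exfalso
      apply hndvd
      rw [Nat.dvd_div_iff_mul_dvd hpN]
      rw [← Nat.factorization_le_iff_dvd (Nat.mul_ne_zero hpp.ne_zero (hd0 p hp)) hN0.ne']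
      intro r
      rw [Nat.factorization_mul hpp.ne_zero (hd0 p hp)]
      rcases eq_or_ne r p with rfl | hrp
      · simp only [Finsupp.coe_add, Pi.add_apply, Nat.Prime.factorization_self hpp]
        omega
      · simp only [Finsupp.coe_add, Pi.add_apply]
        have : (p.factorization) r = 0 := by
          rw [hpp.factorization]
          simp [hrp.symm]
        rw [this, zero_add]
        exact (Nat.factorization_le_iff_dvd (hd0 p hp) hN0.ne').mpr hdvd r
    · exact heq
  have he0 : e ≠ 0 := by
    rw [← he p0 hp0]
    exact (Nat.ordCompl_pos q (hd0 p0 hp0)).ne'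
  have hed : e = ordCompl[q] N := by
    apply Nat.dvd_antisymm
    · rw [← he p0 hp0]
      exact Nat.ordCompl_dvd_ordCompl_of_dvd (hd p0 hp0).1 q
    · rw [← Nat.factorization_le_iff_dvd (Nat.ordCompl_pos q hN0.ne').ne' he0]
      intro r
      rw [Nat.factorization_ordCompl]
      rcases eq_or_ne r q with rfl | hrq
      · simp
      · rw [Finsupp.erase_ne hrq]
        by_cases hrN : r ∈ N.primeFactors
        · rw [← he r hrN, Nat.factorization_ordCompl, Finsupp.erase_ne hrq, hvp r hrN]
        · have : N.factorization r = 0 := by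
            by_contra hcon
            exact hrN (Nat.support_factorization N ▸ Finsupp.mem_support_iff.mpr hcon)
          simp [this]
  by_cases hqN : q ∣ N
  · have hqmem : q ∈ N.primeFactors := Nat.mem_primeFactors.mpr ⟨hq, hqN, hN0.ne'⟩
    have : d q = N := by
      have h1 := Nat.ordProj_mul_ordCompl_eq_self (d q) q
      rw [he q hqmem, hvp q hqmem, hed] at h1
      rw [← h1, Nat.ordProj_mul_ordCompl_eq_self]
    exact (hd q hqmem).2.1 this
  · have hq0 : (d p0).factorization q = 0 := by
      apply Nat.factorization_eq_zero_of_not_dvd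
      exact fun h => hqN (h.trans (hd p0 hp0).1)
    have hqN0 : N.factorization q = 0 := Nat.factorization_eq_zero_of_not_dvd hqN
    have h1 : d p0 = N := by
      have h2 := he p0 hp0
      rw [hq0, pow_zero, Nat.div_one] at h2
      rw [h2, hed, hqN0, pow_zero, Nat.div_one]
    exact (hd p0 hp0).2.1 h1

lemma span_Sp_rat_eq_top (N : ℕ) (hN : 1 < N) :
    Ideal.span ((fun p => (Sp N p).map (Int.castRingHom ℚ)) '' ↑N.primeFactors) = ⊤ := by
  apply span_eq_top_of_no_common_factor
  intro g hg
  by_contra hcon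
  push_neg at hcon
  have hdvd : ∀ p ∈ N.primeFactors, ∃ d ∈ N.divisors.filter (fun d => d ≠ N ∧ ¬ d ∣ N / p),
      g ∣ cyclotomic d ℚ := by
    intro p hp
    have h1 : g ∣ (Sp N p).map (Int.castRingHom ℚ) := hcon _ ⟨p, hp, rfl⟩
    rw [Sp, Polynomial.map_prod] at h1
    simp_rw [map_cyclotomic_int] at h1
    exact hg.exists_mem_finset_dvd h1
  choose d hdmem hgd using hdvd
  obtain ⟨p0, hp0⟩ := Nat.nonempty_primeFactors.mpr hN
  have hirr : ∀ p (hp : p ∈ N.primeFactors), Irreducible (cyclotomic (d p hp) ℚ) := by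
    intro p hp
    have hpos : 0 < d p hp := Nat.pos_of_mem_divisors (Finset.mem_filter.mp (hdmem p hp)).1
    exact cyclotomic.irreducible_rat hpos
  have hdeq : ∀ p (hp : p ∈ N.primeFactors), d p hp = d p0 hp0 := by
    intro p hp
    have h1 : Associated (cyclotomic (d p hp) ℚ) (cyclotomic (d p0 hp0) ℚ) :=
      ((hg.irreducible.associated_of_dvd (hirr p hp) (hgd p hp)).symm.trans
        (hg.irreducible.associated_of_dvd (hirr p0 hp0) (hgd p0 hp0)))
    have h2 := Polynomial.eq_of_monic_of_associated (cyclotomic.monic _ _) (cyclotomic.monic _ _) h1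
    exact cyclotomic_injective h2
  have hDprop := Finset.mem_filter.mp (hdmem p0 hp0)
  have hDdvd : d p0 hp0 ∣ N := (Nat.mem_divisors.mp hDprop.1).1
  have hDne : d p0 hp0 ≠ N := hDprop.2.1
  obtain ⟨p, hpp, hpN, hDdiv⟩ := exists_prime_dvd_div (by omega) hDdvd hDne
  have hpmem : p ∈ N.primeFactors := Nat.mem_primeFactors.mpr ⟨hpp, hpN, by omega⟩
  have hfin := (Finset.mem_filter.mp (hdmem p hpmem)).2.2
  rw [hdeq p hpmem] at hfin
  exact hfin hDdiv

lemma span_Sp_zmod_eq_top (N : ℕ) (hN : 1 < N) (q : ℕ) (hq : q.Prime) :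
    Ideal.span ((fun p => (Sp N p).map (Int.castRingHom (ZMod q))) '' ↑N.primeFactors) = ⊤ := by
  haveI : Fact q.Prime := ⟨hq⟩
  apply span_eq_top_of_no_common_factor
  intro g hg
  by_contra hcon
  push_neg at hcon
  have hdvd : ∀ p ∈ N.primeFactors, ∃ d ∈ N.divisors.filter (fun d => d ≠ N ∧ ¬ d ∣ N / p),
      g ∣ cyclotomic d (ZMod q) := by
    intro p hp
    have h1 : g ∣ (Sp N p).map (Int.castRingHom (ZMod q)) := hcon _ ⟨p, hp, rfl⟩
    rw [Sp, Polynomial.map_prod] at h1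
    simp_rw [map_cyclotomic_int] at h1
    exact hg.exists_mem_finset_dvd h1
  choose d hdmem hgd using hdvd
  haveI : Fact (Irreducible g) := ⟨hg.irreducible⟩
  set K := AdjoinRoot g with hKdef
  haveI : CharP K q := charP_of_injective_algebraMap (algebraMap (ZMod q) K).injective q
  set ζ := AdjoinRoot.root g with hζ
  have hroot : ∀ p (hp : p ∈ N.primeFactors), IsRoot (cyclotomic (d p hp) K) ζ := by
    intro p hp
    have h0 : AdjoinRoot.mk g (cyclotomic (d p hp) (ZMod q)) = 0 :=
      AdjoinRoot.mk_eq_zero.mpr (hgd p hp)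
    have h1 : aeval ζ (cyclotomic (d p hp) (ZMod q)) = 0 := by
      rw [AdjoinRoot.aeval_eq]; exact h0
    rwa [aeval_def, ← eval_map, map_cyclotomic] at h1
  have hord : ∀ p (hp : p ∈ N.primeFactors), ordCompl[q] (d p hp) = orderOf ζ := by
    intro p hp
    have hd0 : d p hp ≠ 0 :=
      (Nat.pos_of_mem_divisors (Finset.mem_filter.mp (hdmem p hp)).1).ne'
    have hndvd : ¬ q ∣ ordCompl[q] (d p hp) := Nat.not_dvd_ordCompl hq hd0
    haveI : NeZero ((ordCompl[q] (d p hp) : ℕ) : K) :=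
      ⟨fun h => hndvd ((CharP.cast_eq_zero_iff K q _).mp h)⟩
    have hroot' : IsRoot
        (cyclotomic (q ^ ((d p hp).factorization q) * ordCompl[q] (d p hp)) K) ζ := by
      rw [Nat.ordProj_mul_ordCompl_eq_self]; exact hroot p hp
    have hprim : IsPrimitiveRoot ζ (ordCompl[q] (d p hp)) :=
      isRoot_cyclotomic_prime_pow_mul_iff_of_charP.mp hroot'
    exact hprim.eq_orderOf
  -- flatten the dependent function
  classical
  set d' : ℕ → ℕ := fun p => if hp : p ∈ N.primeFactors then d p hp else 0 with hd'
  apply arith_contradiction N q hN hq d' (orderOf ζ)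
  · intro p hp
    have hmem := Finset.mem_filter.mp (hdmem p hp)
    simp only [hd', dif_pos hp]
    exact ⟨(Nat.mem_divisors.mp hmem.1).1, hmem.2.1, hmem.2.2⟩
  · intro p hp
    simp only [hd', dif_pos hp]
    exact hord p hp

lemma one_mem_span_Sp (N : ℕ) (hN : 1 < N) :
    (1 : Polynomial ℤ) ∈ Ideal.span ((fun p => Sp N p) '' ↑N.primeFactors) := by
  set s : Set (Polynomial ℤ) := (fun p => Sp N p) '' ↑N.primeFactors with hs
  obtain ⟨c, hc0, hcmem⟩ := exists_C_mem_span_of_rat s (by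
    rw [hs, Set.image_image]
    exact span_Sp_rat_eq_top N hN)
  apply one_mem_of_descent _ ?_ c hc0 hcmem
  intro q hq
  apply sup_span_C_eq_top s q hq
  rw [hs, Set.image_image]
  exact span_Sp_zmod_eq_top N hN q hq

end SpanQNDAux

open SpanQNDAux in
/-- For `N > 1`, the ideal of `ℤ[T]` generated by the polynomials `Q_{N, N/p}(T)`, as `p`
ranges over the prime divisors of `N`, equals the principal ideal `(Φ_N(T))`. -/
theorem span_QND_eq_span_cyclotomic (N : ℕ) (hN : 1 < N) :
    Ideal.span ((fun p => QND N (N / p)) '' {p : ℕ | p.Prime ∧ p ∣ N}) =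
      Ideal.span {cyclotomic N ℤ} := by
  have hset : {p : ℕ | p.Prime ∧ p ∣ N} = ↑N.primeFactors := by
    ext p
    simp only [Set.mem_setOf_eq, Finset.mem_coe, Nat.mem_primeFactors]
    exact ⟨fun ⟨h1, h2⟩ => ⟨h1, h2, by omega⟩, fun ⟨h1, h2, _⟩ => ⟨h1, h2⟩⟩
  rw [hset]
  have himg : (fun p => QND N (N / p)) '' ↑N.primeFactors
      = (fun p => cyclotomic N ℤ * Sp N p) '' ↑N.primeFactors := by
    apply Set.image_congr
    intro p hp
    rw [Finset.mem_coe, Nat.mem_primeFactors] at hp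
    exact QND_eq_cyclotomic_mul_Sp hN hp.1 hp.2.1
  rw [himg]
  apply le_antisymm
  · rw [Ideal.span_le]
    rintro f ⟨p, hp, rfl⟩
    exact Ideal.mem_span_singleton.2 ⟨Sp N p, rfl⟩
  · rw [Ideal.span_le, Set.singleton_subset_iff]
    have h1 := one_mem_span_Sp N hN
    obtain ⟨co, hsupp, hsum⟩ := Submodule.mem_span_set.mp h1
    have key : cyclotomic N ℤ = ∑ x ∈ co.support, co x * (cyclotomic N ℤ * x) := by
      conv_lhs => rw [← mul_one (cyclotomic N ℤ), ← hsum]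
      rw [Finsupp.sum, Finset.mul_sum]
      exact Finset.sum_congr rfl fun x hx => by rw [smul_eq_mul]; ring
    have hmem : (∑ x ∈ co.support, co x * (cyclotomic N ℤ * x)) ∈
        Ideal.span ((fun p => cyclotomic N ℤ * Sp N p) '' ↑N.primeFactors) := by
      apply Ideal.sum_mem
      intro x hx
      obtain ⟨p, hp, hpx⟩ := hsupp hx
      rw [← hpx]
      exact Ideal.mul_mem_left _ _ (Ideal.subset_span ⟨p, hp, rfl⟩)
    rwa [← key] at hmem
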